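/- Let u be C² on [-L,L] × [0,b] with u even in the second variable about y = 0 (after extension), D_{n+1}u = 0 on the lateral boundary edge E × [0,b], and D_{n+1}u < 0 in the interior region int × (0,b]. Then the inward normal derivative D_η u on the lateral boundary satisfies: s ↦ D_η u(x, s) is nonincreasing in s on [0,b] for each fixed boundary point x. -/

import Mathlib

/-- Monotonicity of the boundary slope along the lateral edge.  Let `u` be
`C²` on `[-L,L] × [0,b]` (extended evenly about `y = 0`), with the last
partial derivative `∂u/∂y` vanishing on the lateral boundary edges
`{±L} × [0,b]` and strictly negative in the interior region
`(-L,L) × (0,b]`.  Then the inward normal derivative `D_η u` on the lateral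
boundary (which is `-∂u/∂x` at `x = L` and `∂u/∂x` at `x = -L`) is
nonincreasing in `s ∈ [0,b]`. -/
theorem boundary_slope_monotone (L b : ℝ) (hL : 0 < L) (hb : 0 < b)
    (u : ℝ × ℝ → ℝ) (hu : ContDiff ℝ 2 u)
    (heven : ∀ x y : ℝ, u (x, y) = u (x, -y))
    (hedge : ∀ s ∈ Set.Icc 0 b,
      deriv (fun t => u (L, t)) s = 0 ∧ deriv (fun t => u (-L, t)) s = 0)
    (hint : ∀ x ∈ Set.Ioo (-L) L, ∀ y ∈ Set.Ioc 0 b,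
      deriv (fun t => u (x, t)) y < 0) :
    AntitoneOn (fun s => -(deriv (fun t => u (t, s)) L)) (Set.Icc 0 b) ∧
    AntitoneOn (fun s => deriv (fun t => u (t, s)) (-L)) (Set.Icc 0 b) := by
  have hud : Differentiable ℝ u := hu.differentiable (by norm_num)
  set F := fderiv ℝ u with hF
  have hF1 : ContDiff ℝ 1 F := hu.fderiv_right (m := 1) (by norm_num)
  have hFd : Differentiable ℝ F := hF1.differentiable (by norm_num)
  have hdx : ∀ x s : ℝ, HasDerivAt (fun t => u (t, s)) (F (x, s) (1, 0)) x := by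
    intro x s
    have h1 : HasDerivAt (fun t : ℝ => (t, s)) ((1 : ℝ), (0 : ℝ)) x :=
      (hasDerivAt_id x).prodMk (hasDerivAt_const x s)
    exact (hud (x, s)).hasFDerivAt.comp_hasDerivAt x h1
  have hdy : ∀ x s : ℝ, HasDerivAt (fun t => u (x, t)) (F (x, s) (0, 1)) s := by
    intro x s
    have h1 : HasDerivAt (fun t : ℝ => (x, t)) ((0 : ℝ), (1 : ℝ)) s :=
      (hasDerivAt_const s x).prodMk (hasDerivAt_id s)
    exact (hud (x, s)).hasFDerivAt.comp_hasDerivAt s h1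
  have hFline_x : ∀ x s : ℝ, HasDerivAt (fun t => F (t, s)) (fderiv ℝ F (x, s) (1, 0)) x := by
    intro x s
    have h1 : HasDerivAt (fun t : ℝ => (t, s)) ((1 : ℝ), (0 : ℝ)) x :=
      (hasDerivAt_id x).prodMk (hasDerivAt_const x s)
    exact (hFd (x, s)).hasFDerivAt.comp_hasDerivAt x h1
  have hFline_y : ∀ x s : ℝ, HasDerivAt (fun t => F (x, t)) (fderiv ℝ F (x, s) (0, 1)) s := by
    intro x s
    have h1 : HasDerivAt (fun t : ℝ => (x, t)) ((0 : ℝ), (1 : ℝ)) s :=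
      (hasDerivAt_const s x).prodMk (hasDerivAt_id s)
    exact (hFd (x, s)).hasFDerivAt.comp_hasDerivAt s h1
  have symm2 : ∀ p : ℝ × ℝ, ∀ v w, fderiv ℝ F p v w = fderiv ℝ F p w v := by
    intro p v w
    exact second_derivative_symmetric (fun y => (hud y).hasFDerivAt) ((hFd p).hasFDerivAt) v w
  -- derivative of s ↦ ∂ₓu(x₀, s)
  have hg : ∀ x s : ℝ, HasDerivAt (fun s => F (x, s) (1, 0)) (fderiv ℝ F (x, s) (0, 1) (1, 0)) s := by
    intro x s
    simpa using (hFline_y x s).clm_apply (hasDerivAt_const s ((1 : ℝ), (0 : ℝ)))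
  -- derivative of x ↦ ∂ₛu(x, s)
  have hh : ∀ x s : ℝ, HasDerivAt (fun x => F (x, s) (0, 1)) (fderiv ℝ F (x, s) (1, 0) (0, 1)) x := by
    intro x s
    simpa using (hFline_x x s).clm_apply (hasDerivAt_const x ((0 : ℝ), (1 : ℝ)))
  have hneg : ∀ s ∈ Set.Ioo (0 : ℝ) b, ∀ x ∈ Set.Ioo (-L) L, F (x, s) (0, 1) < 0 := by
    intro s hs x hx
    have := hint x hx s ⟨hs.1, hs.2.le⟩
    rwa [(hdy x s).deriv] at this
  have keyR : ∀ s ∈ Set.Ioo (0 : ℝ) b, 0 ≤ fderiv ℝ F (L, s) (1, 0) (0, 1) := by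
    intro s hs
    have hL0 : F (L, s) ((0 : ℝ), (1 : ℝ)) = 0 := by
      have := (hedge s ⟨hs.1.le, hs.2.le⟩).1
      rwa [(hdy L s).deriv] at this
    have htend : Filter.Tendsto (slope (fun x => F (x, s) (0, 1)) L) (nhdsWithin L (Set.Iio L))
        (nhds (fderiv ℝ F (L, s) (1, 0) (0, 1))) :=
      (hasDerivAt_iff_tendsto_slope.mp (hh L s)).mono_left
        (nhdsWithin_mono L (fun x hx => ne_of_lt hx))
    refine ge_of_tendsto htend ?_
    filter_upwards [Ioo_mem_nhdsLT (neg_lt_self hL)] with x hx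
    rw [slope_def_field, hL0]
    have h1 := hneg s hs x hx
    have h2 : x - L < 0 := by linarith [hx.2]
    have h3 : 0 ≤ (F (x, s) (0, 1) - 0) / (x - L) := by
      rw [div_nonneg_iff]; right; constructor <;> linarith
    simpa using h3
  have keyL : ∀ s ∈ Set.Ioo (0 : ℝ) b, fderiv ℝ F (-L, s) (1, 0) (0, 1) ≤ 0 := by
    intro s hs
    have hL0 : F (-L, s) ((0 : ℝ), (1 : ℝ)) = 0 := by
      have := (hedge s ⟨hs.1.le, hs.2.le⟩).2
      rwa [(hdy (-L) s).deriv] at this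
    have htend : Filter.Tendsto (slope (fun x => F (x, s) (0, 1)) (-L)) (nhdsWithin (-L) (Set.Ioi (-L)))
        (nhds (fderiv ℝ F (-L, s) (1, 0) (0, 1))) :=
      (hasDerivAt_iff_tendsto_slope.mp (hh (-L) s)).mono_left
        (nhdsWithin_mono (-L) (fun x hx => ne_of_gt hx))
    refine le_of_tendsto htend ?_
    filter_upwards [Ioo_mem_nhdsGT (neg_lt_self hL)] with x hx
    rw [slope_def_field, hL0]
    have h1 := hneg s hs x hx
    have h2 : 0 < x - (-L) := by linarith [hx.1]
    have : (F (x, s) (0,1) - 0) / (x - (-L)) ≤ 0 :=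
      div_nonpos_of_nonpos_of_nonneg (by linarith) h2.le
    simpa using this
  constructor
  · have heq : (fun s => -(deriv (fun t => u (t, s)) L)) = fun s => -(F (L, s) (1, 0)) := by
      funext s; rw [(hdx L s).deriv]
    rw [heq]
    apply antitoneOn_of_deriv_nonpos (convex_Icc 0 b)
    · exact ((fun s => ((hg L s).continuousAt : ContinuousAt _ s)) |>
        (fun h => (continuous_iff_continuousAt.mpr h).neg.continuousOn))
    · intro s _
      exact ((hg L s).neg).differentiableAt.differentiableWithinAt
    · intro s hs
      rw [interior_Icc] at hs
      rw [(show HasDerivAt (fun s => -(F (L, s)) (1, 0)) _ s from (hg L s).neg).deriv]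
      have := keyR s hs
      rw [symm2 (L, s) (1,0) (0,1)] at this
      linarith
  · have heq : (fun s => deriv (fun t => u (t, s)) (-L)) = fun s => F (-L, s) (1, 0) := by
      funext s; rw [(hdx (-L) s).deriv]
    rw [heq]
    apply antitoneOn_of_deriv_nonpos (convex_Icc 0 b)
    · exact (continuous_iff_continuousAt.mpr (fun s => (hg (-L) s).continuousAt)).continuousOn
    · intro s _
      exact (hg (-L) s).differentiableAt.differentiableWithinAt
    · intro s hs
      rw [interior_Icc] at hs
      rw [(hg (-L) s).deriv]
      have := keyL s hs
      rwa [symm2 (-L, s) (1,0) (0,1)] at this
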